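/- Consider N subsystems with progress functions p_i valued in [0,1], synchronized with absolute progress barriers 0 = b_0 < b_1 < ⋯ < b_m = 1 of maximal spacing γ = max_l (b_l − b_{l−1}): at each step, letting μ = min_j p_j, the current barrier is b = the least b_l with b_l > μ (b = 1 if μ = 1); component i is ticked if and only if p_i ≤ b, an unticked component's progress is unchanged, and each tick changes a component's progress monotonically by at most a ≥ 0 (i.e. p_i(old) ≤ p_i(new) ≤ p_i(old) + a). If initially max_i p_i − min_j p_j ≤ γ + a (for instance all progresses start at 0), then for every step k of the synchronized execution, max_i p_i − min_j p_j ≤ γ + a; in particular, with m equidistant barriers (γ = 1/m) the pairwise progress differences are bounded by 1/m + a, so a larger number of barriers yields a uniformly smaller progress distance bound. -/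

import Mathlib

/-- Under absolute progress synchronization with barriers
`0 = b_0 < b_1 < ⋯ < b_m = 1` of maximal spacing `γ` (component `i` is ticked iff
`p_i ≤ bar`, where `bar` is the least barrier strictly above the minimum progress,
and `bar = 1` when the minimum progress is `1`; unticked progress is unchanged;
each tick increases progress by at most `a`), if initially
`max p − min p ≤ γ + a` then this bound holds at every step; in particular with
`m` equidistant barriers the pairwise progress differences are bounded by
`1/m + a`. -/
theorem stmt12 (N m : ℕ) (hN : 0 < N) (hm : 0 < m) (a : ℝ) (ha : 0 ≤ a)
    (b : Fin (m + 1) → ℝ) (hb0 : b 0 = 0) (hblast : b (Fin.last m) = 1)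
    (hbmono : StrictMono b)
    (γ : ℝ) (hγ : γ = ⨆ l : Fin m, (b l.succ - b l.castSucc))
    (p : ℕ → Fin N → ℝ)
    (hp01 : ∀ k i, p k i ∈ Set.Icc (0 : ℝ) 1)
    (bar : ℕ → ℝ)
    (hbar1 : ∀ k, (⨅ j, p k j) = 1 → bar k = 1)
    (hbar2 : ∀ k, (⨅ j, p k j) < 1 →
      IsLeast {t : ℝ | (∃ l, t = b l) ∧ (⨅ j, p k j) < t} (bar k))
    (huntick : ∀ k i, ¬ (p k i ≤ bar k) → p (k + 1) i = p k i)
    (htick : ∀ k i, p k i ≤ bar k →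
      p k i ≤ p (k + 1) i ∧ p (k + 1) i ≤ p k i + a)
    (hinit : (⨆ i, p 0 i) - (⨅ j, p 0 j) ≤ γ + a) :
    (∀ k, (⨆ i, p k i) - (⨅ j, p k j) ≤ γ + a) ∧
    ((∀ l : Fin m, b l.succ - b l.castSucc = 1 / (m : ℝ)) →
      ∀ k i j, |p k i - p k j| ≤ 1 / (m : ℝ) + a) := by
  haveI : Nonempty (Fin N) := ⟨⟨0, hN⟩⟩
  haveI : Nonempty (Fin m) := ⟨⟨0, hm⟩⟩
  have hbddS : ∀ k, BddAbove (Set.range (p k)) :=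
    fun k => (Set.finite_range _).bddAbove
  have hbddI : ∀ k, BddBelow (Set.range (p k)) :=
    fun k => (Set.finite_range _).bddBelow
  have hgap : ∀ l : Fin m, b l.succ - b l.castSucc ≤ γ := by
    intro l
    rw [hγ]
    exact le_ciSup (f := fun l : Fin m => b l.succ - b l.castSucc) ((Set.finite_range _).bddAbove) l
  have hγ0 : 0 < γ :=
    lt_of_lt_of_le (sub_pos.mpr (hbmono (show (⟨0, hm⟩ : Fin m).castSucc < (⟨0, hm⟩ : Fin m).succ from Fin.castSucc_lt_succ)))
      (hgap ⟨0, hm⟩)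
  have hmono : ∀ k i, p k i ≤ p (k + 1) i := by
    intro k i
    by_cases h : p k i ≤ bar k
    · exact (htick k i h).1
    · rw [huntick k i h]
  have hinf_mono : ∀ k, (⨅ j, p k j) ≤ ⨅ j, p (k + 1) j := fun k =>
    le_ciInf fun i => (ciInf_le (hbddI k) i).trans (hmono k i)
  have hinf0 : ∀ k, (0 : ℝ) ≤ ⨅ j, p k j := fun k =>
    le_ciInf fun i => (hp01 k i).1
  have hsup1 : ∀ k, (⨆ i, p k i) ≤ 1 := fun k =>
    ciSup_le fun i => (hp01 k i).2
  have main : ∀ k, (⨆ i, p k i) - (⨅ j, p k j) ≤ γ + a := by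
    intro k
    induction k with
    | zero => exact hinit
    | succ k ih =>
      by_cases hlt : (⨅ j, p k j) < 1
      · obtain ⟨⟨⟨l, hbl⟩, hbarlt⟩, hleast⟩ := hbar2 k hlt
        rw [hbl] at hbarlt hleast
        -- l ≠ 0
        have hlpos : 0 < l.val := by
          by_contra h
          have : l = 0 := Fin.ext (by show l.val = 0; omega)
          rw [this, hb0] at hbarlt
          exact absurd hbarlt (not_lt.mpr (hinf0 k))
        set l' : Fin m := ⟨l.val - 1, by have := l.isLt; omega⟩ with hl'
        have hsucc : l'.succ = l := Fin.ext (by simp [hl']; omega)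
        have hpred : b l'.castSucc ≤ ⨅ j, p k j := by
          by_contra h
          push_neg at h
          have hle := hleast ⟨⟨l'.castSucc, rfl⟩, h⟩
          have : b l'.castSucc < b l'.succ := hbmono (show l'.castSucc < l'.succ from Fin.castSucc_lt_succ)
          rw [hsucc] at this
          exact absurd (hle.trans_lt this) (lt_irrefl _)
        have hbar_le : b l - (⨅ j, p k j) ≤ γ := by
          have := hgap l'
          rw [hsucc] at this
          linarith
        have hsupbound : (⨆ i, p (k + 1) i) ≤ max (b l + a) (⨆ i, p k i) := by
          apply ciSup_le
          intro i
          by_cases h : p k i ≤ b l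
          · exact le_max_of_le_left ((htick k i (hbl ▸ h)).2.trans (by linarith))
          · rw [huntick k i (hbl ▸ h)]
            exact le_max_of_le_right (le_ciSup (hbddS k) i)
        rcases max_le_iff.mp (le_refl (max (b l + a) (⨆ i, p k i))) with _
        have h1 : (⨆ i, p (k + 1) i) - (⨅ j, p (k + 1) j) ≤
            max (b l + a) (⨆ i, p k i) - (⨅ j, p k j) := by
          have := hinf_mono k
          linarith
        refine h1.trans ?_
        rcases max_cases (b l + a) (⨆ i, p k i) with ⟨he, _⟩ | ⟨he, _⟩ <;> rw [he]
        · linarith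
        · exact ih
      · push_neg at hlt
        have heq1 : (⨅ j, p k j) = 1 := le_antisymm ((ciInf_le (hbddI k) ⟨0, hN⟩).trans (hp01 k _).2) hlt
        have : (1 : ℝ) ≤ ⨅ j, p (k + 1) j := heq1 ▸ hinf_mono k
        have := hsup1 (k + 1)
        linarith
  refine ⟨main, ?_⟩
  intro heq k i j
  have hγval : γ = 1 / (m : ℝ) := by
    rw [hγ]
    simp only [heq]
    exact ciSup_const
  have hi : p k i ≤ ⨆ i, p k i := le_ciSup (hbddS k) i
  have hj : (⨅ j, p k j) ≤ p k j := ciInf_le (hbddI k) j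
  have hi' : p k j ≤ ⨆ i, p k i := le_ciSup (hbddS k) j
  have hj' : (⨅ j, p k j) ≤ p k i := ciInf_le (hbddI k) i
  have := main k
  rw [hγval] at this
  rw [abs_sub_le_iff]
  constructor <;> linarith
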